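/- Let t_1, …, t_m ∈ H_0(K̃_b) be elements whose cosets modulo im(ψ_{b−1}) are linearly independent in H_0(K̃_b)/im(ψ_{b−1}), and suppose each t_i has persistence interval (b, d_i) in H_0(K̃_•) (with d_i ∈ {b+1,…,n} ∪ {∞}). Then there exist s_1, …, s_m ∈ H_0(K_b) with θ_{0,b}(s_i) = t_i for every i, whose cosets modulo im(φ_{b−1}) are linearly independent in H_0(K_b)/im(φ_{b−1}), and such that each s_i has persistence interval (b, d_i) in H_0(K_•). In particular, the 0-th persistence barcode of the filtration K̃_• is contained (as a multiset of intervals) in the 0-th persistence barcode of the filtration K_•. -/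

import Mathlib

/-- An abstract simplicial complex on a vertex type `α`: a collection of nonempty
finite subsets of `α` closed under passing to nonempty subsets. -/
structure AbsSC (α : Type) where
  faces : Set (Finset α)
  not_empty_mem : ∅ ∉ faces
  down_closed : ∀ {s t : Finset α}, s ∈ faces → t ⊆ s → t.Nonempty → t ∈ faces

namespace AbsSC

variable {α : Type}

/-- The vertex set of an abstract simplicial complex. -/
def vertexSet (K : AbsSC α) : Set α := {v | {v} ∈ K.faces}

/-- The type of `q`-simplices (faces with `q+1` vertices). -/
def simplices (K : AbsSC α) (q : ℕ) : Type :=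
  {s : Finset α // s ∈ K.faces ∧ s.card = q + 1}

/-- The space of `q`-chains over `ℤ/2`: formal sums of `q`-simplices. -/
abbrev Chain (K : AbsSC α) (q : ℕ) : Type := K.simplices q →₀ ZMod 2

/-- The sum of the `q`-dimensional faces of a `(q+1)`-simplex. -/
noncomputable def faceChain (K : AbsSC α) (q : ℕ) (s : K.simplices (q + 1)) : K.Chain q :=
  ∑ t ∈ (s.1.powersetCard (q + 1)).attach,
    Finsupp.single
      ⟨t.1, by
        obtain ⟨hsub, hcard⟩ := Finset.mem_powersetCard.mp t.2
        refine ⟨K.down_closed s.2.1 hsub ?_, hcard⟩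
        rw [← Finset.card_pos, hcard]
        omega⟩
      (1 : ZMod 2)

/-- The boundary map `∂_{q+1} : C_{q+1}(K) → C_q(K)`, sending each `(q+1)`-simplex to
the sum of its `q`-dimensional faces. -/
noncomputable def boundary (K : AbsSC α) (q : ℕ) :
    K.Chain (q + 1) →ₗ[ZMod 2] K.Chain q :=
  Finsupp.lsum (ZMod 2) fun s => LinearMap.toSpanSingleton (ZMod 2) (K.Chain q) (K.faceChain q s)

/-- The cycle subspace: `ker ∂_q` (all of `C_0` in degree `0`). -/
noncomputable def cycles (K : AbsSC α) : (q : ℕ) → Submodule (ZMod 2) (K.Chain q)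
  | 0 => ⊤
  | q + 1 => LinearMap.ker (K.boundary q)

/-- The boundaries, viewed as a submodule of the cycles. -/
noncomputable def boundariesIn (K : AbsSC α) (q : ℕ) :
    Submodule (ZMod 2) (K.cycles q) :=
  Submodule.comap (K.cycles q).subtype (LinearMap.range (K.boundary q))

/-- The `q`-th simplicial homology over `ℤ/2`: `H_q(K) = ker ∂_q / im ∂_{q+1}`. -/
def Homology (K : AbsSC α) (q : ℕ) : Type :=
  (K.cycles q) ⧸ (K.boundariesIn q)

noncomputable instance (K : AbsSC α) (q : ℕ) : AddCommGroup (K.Homology q) :=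
  inferInstanceAs (AddCommGroup ((K.cycles q) ⧸ (K.boundariesIn q)))

noncomputable instance (K : AbsSC α) (q : ℕ) : Module (ZMod 2) (K.Homology q) :=
  inferInstanceAs (Module (ZMod 2) ((K.cycles q) ⧸ (K.boundariesIn q)))

/-- The homology class of a cycle. -/
noncomputable def hClass (K : AbsSC α) (q : ℕ) (c : K.Chain q) (hc : c ∈ K.cycles q) :
    K.Homology q :=
  Submodule.Quotient.mk ⟨c, hc⟩

/-- The chain map induced by an inclusion of simplicial complexes. -/
noncomputable def chainMap (K L : AbsSC α) (h : K.faces ⊆ L.faces) (q : ℕ) :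
    K.Chain q →ₗ[ZMod 2] L.Chain q :=
  Finsupp.lmapDomain (ZMod 2) (ZMod 2) fun s : K.simplices q =>
    (⟨s.1, h s.2.1, s.2.2⟩ : L.simplices q)

/-- `θ` is the map on `q`-th homology induced by the inclusion `K ⊆ L`: it sends the
class of every cycle `c` of `K` to the class of the image chain of `c` in `L`. -/
def InducedHom (K L : AbsSC α) (q : ℕ)
    (θ : K.Homology q →ₗ[ZMod 2] L.Homology q) : Prop :=
  ∃ h : K.faces ⊆ L.faces,
    ∀ (c : K.Chain q) (hc : c ∈ K.cycles q),
      ∃ hc' : chainMap K L h q c ∈ L.cycles q,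
        θ (K.hClass q c hc) = L.hClass q (chainMap K L h q c) hc'

end AbsSC

/-- The faces of the gluing stars `S = S_1 ⊔ ⋯ ⊔ S_k`: for each `j`, the vertex `{z j}`,
the vertices `{v}` for `v ∈ P j`, and the edges `{z j, v}` for `v ∈ P j`. -/
def starFaces {α : Type} [DecidableEq α] {k : ℕ} (P : Fin k → Set α) (z : Fin k → α) :
    Set (Finset α) :=
  {s | ∃ j : Fin k, s = {z j} ∨ ∃ v ∈ P j, s = {v} ∨ s = {z j, v}}

section Tower

variable {W : ℕ → Type} [∀ i, AddCommGroup (W i)] [∀ i, Module (ZMod 2) (W i)]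

/-- The composite `φ_{i,j} = φ_{j-1} ∘ ⋯ ∘ φ_i` of the connecting maps of a tower
(the identity when `i = j`). -/
noncomputable def comps (φ : ∀ i, W i →ₗ[ZMod 2] W (i + 1)) {i j : ℕ} (h : i ≤ j) :
    W i →ₗ[ZMod 2] W j :=
  Nat.leRecOn (C := fun m => W i →ₗ[ZMod 2] W m) h (fun {m} g => (φ m).comp g) LinearMap.id

/-- `s ∈ W b` has persistence interval `(b, d)` with finite death `d ∈ {b+1, …, n}`:
`s ∉ im φ_{b-1}`, `φ_{b,d'}(s) ∉ im φ_{b-1,d'}` for all `b ≤ d' < d`, and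
`φ_{b,d}(s) ∈ im φ_{b-1,d}`. -/
def HasPersIntervalFin (φ : ∀ i, W i →ₗ[ZMod 2] W (i + 1)) (n b d : ℕ) (s : W b) : Prop :=
  ∃ (_ : 1 ≤ b) (hbd : b < d) (_ : d ≤ n),
    s ∉ LinearMap.range (comps φ (Nat.sub_le b 1)) ∧
    (∀ (d' : ℕ) (hd' : b ≤ d'), d' < d →
      comps φ hd' s ∉ LinearMap.range (comps φ (Nat.le_trans (Nat.sub_le b 1) hd'))) ∧
    comps φ (Nat.le_of_lt hbd) s ∈
      LinearMap.range (comps φ (Nat.le_trans (Nat.sub_le b 1) (Nat.le_of_lt hbd)))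

/-- `s ∈ W b` has persistence interval `(b, ∞)`: `s ∉ im φ_{b-1}` and
`φ_{b,d'}(s) ∉ im φ_{b-1,d'}` for all `b ≤ d' ≤ n`. -/
def HasPersIntervalInf (φ : ∀ i, W i →ₗ[ZMod 2] W (i + 1)) (n b : ℕ) (s : W b) : Prop :=
  ∃ _ : 1 ≤ b,
    s ∉ LinearMap.range (comps φ (Nat.sub_le b 1)) ∧
    ∀ (d' : ℕ) (hd' : b ≤ d'), d' ≤ n →
      comps φ hd' s ∉ LinearMap.range (comps φ (Nat.le_trans (Nat.sub_le b 1) hd'))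

end Tower

section TowerAux

variable {W : ℕ → Type} [∀ i, AddCommGroup (W i)] [∀ i, Module (ZMod 2) (W i)]
variable (φ : ∀ i, W i →ₗ[ZMod 2] W (i + 1))

theorem comps_self {i : ℕ} (h : i ≤ i) : comps φ h = LinearMap.id := by
  unfold comps; exact Nat.leRecOn_self _

theorem comps_succ_of_le {i j : ℕ} (h : i ≤ j) (h' : i ≤ j + 1) :
    comps φ h' = (φ j).comp (comps φ h) := by
  unfold comps; exact Nat.leRecOn_succ h _

theorem comps_trans {i j l : ℕ} (h1 : i ≤ j) (h2 : j ≤ l) (h3 : i ≤ l) :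
    (comps φ h2).comp (comps φ h1) = comps φ h3 := by
  induction l, h2 using Nat.le_induction with
  | base => rw [comps_self]; ext x; simp
  | succ l h2 ih =>
    rw [comps_succ_of_le φ h2 (h2.trans l.le_succ), comps_succ_of_le φ (h1.trans h2) h3,
      LinearMap.comp_assoc, ih (h1.trans h2)]

theorem comps_trans_apply {i j l : ℕ} (h1 : i ≤ j) (h2 : j ≤ l) (h3 : i ≤ l) (x : W i) :
    comps φ h2 (comps φ h1 x) = comps φ h3 x := by
  rw [← comps_trans φ h1 h2 h3]; rfl

end TowerAux
section TowerAux2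

variable {V W : ℕ → Type} [∀ i, AddCommGroup (V i)] [∀ i, Module (ZMod 2) (V i)]
  [∀ i, AddCommGroup (W i)] [∀ i, Module (ZMod 2) (W i)]

theorem comm_comps (n : ℕ) (φ : ∀ i, V i →ₗ[ZMod 2] V (i + 1))
    (ψ : ∀ i, W i →ₗ[ZMod 2] W (i + 1)) (θ : ∀ i, V i →ₗ[ZMod 2] W i)
    (hsq : ∀ i, i < n → (θ (i + 1)).comp (φ i) = (ψ i).comp (θ i))
    {i j : ℕ} (h : i ≤ j) (hj : j ≤ n) :
    (θ j).comp (comps φ h) = (comps ψ h).comp (θ i) := by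
  induction j, h using Nat.le_induction with
  | base => rw [comps_self, comps_self]; ext x; simp
  | succ j h ih =>
    rw [comps_succ_of_le φ h (h.trans j.le_succ), comps_succ_of_le ψ h (h.trans j.le_succ),
      ← LinearMap.comp_assoc, hsq j (by omega), LinearMap.comp_assoc,
      ih (by omega), LinearMap.comp_assoc]

theorem comm_comps_apply (n : ℕ) (φ : ∀ i, V i →ₗ[ZMod 2] V (i + 1))
    (ψ : ∀ i, W i →ₗ[ZMod 2] W (i + 1)) (θ : ∀ i, V i →ₗ[ZMod 2] W i)
    (hsq : ∀ i, i < n → (θ (i + 1)).comp (φ i) = (ψ i).comp (θ i))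
    {i j : ℕ} (h : i ≤ j) (hj : j ≤ n) (x : V i) :
    θ j (comps φ h x) = comps ψ h (θ i x) := by
  have := comm_comps n φ ψ θ hsq h hj
  exact DFunLike.congr_fun this x

end TowerAux2
namespace AbsSC

variable {α : Type}

theorem cycles_zero (K : AbsSC α) : K.cycles 0 = ⊤ := rfl

/-- The class map `C_0(K) → H_0(K)` as a linear map. -/
noncomputable def hmap (K : AbsSC α) : K.Chain 0 →ₗ[ZMod 2] K.Homology 0 :=
  (K.boundariesIn 0).mkQ.comp
    (LinearMap.codRestrict (K.cycles 0) LinearMap.id (fun c => by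
      rw [cycles_zero]; trivial))

theorem hmap_eq_hClass (K : AbsSC α) (c : K.Chain 0) (hc : c ∈ K.cycles 0) :
    K.hmap c = K.hClass 0 c hc := rfl

theorem hmap_surjective (K : AbsSC α) : Function.Surjective K.hmap := by
  intro x
  obtain ⟨⟨c, hc⟩, rfl⟩ := Submodule.mkQ_surjective _ x
  exact ⟨c, rfl⟩

theorem hmap_eq_zero_iff (K : AbsSC α) (c : K.Chain 0) :
    K.hmap c = 0 ↔ c ∈ LinearMap.range (K.boundary 0) := by
  change Submodule.Quotient.mk _ = 0 ↔ _
  rw [Submodule.Quotient.mk_eq_zero]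
  rfl

end AbsSC
namespace AbsSC

variable {α : Type}

/-- The simplex map underlying `chainMap`. -/
def simpMap (K L : AbsSC α) (h : K.faces ⊆ L.faces) (q : ℕ) (s : K.simplices q) :
    L.simplices q := ⟨s.1, h s.2.1, s.2.2⟩

instance simplicesDecEq (K : AbsSC α) (q : ℕ) [DecidableEq α] :
    DecidableEq (K.simplices q) :=
  fun a b => decidable_of_iff (a.1 = b.1) Subtype.ext_iff.symm

theorem simpMap_injective (K L : AbsSC α) (h : K.faces ⊆ L.faces) (q : ℕ) :
    Function.Injective (simpMap K L h q) := by
  intro s t hst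
  have h1 : (simpMap K L h q s).1 = (simpMap K L h q t).1 := congrArg Subtype.val hst
  exact Subtype.ext h1

theorem chainMap_apply (K L : AbsSC α) (h : K.faces ⊆ L.faces) (q : ℕ) (c : K.Chain q) :
    chainMap K L h q c = Finsupp.mapDomain (simpMap K L h q) c := rfl

theorem chainMap_single (K L : AbsSC α) (h : K.faces ⊆ L.faces) (q : ℕ)
    (s : K.simplices q) (a : ZMod 2) :
    chainMap K L h q (Finsupp.single s a) = Finsupp.single (simpMap K L h q s) a := by
  rw [chainMap_apply, Finsupp.mapDomain_single]

theorem chainMap_injective (K L : AbsSC α) (h : K.faces ⊆ L.faces) (q : ℕ) :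
    Function.Injective (chainMap K L h q) := by
  intro c d hcd
  rw [chainMap_apply, chainMap_apply] at hcd
  exact Finsupp.mapDomain_injective (simpMap_injective K L h q) hcd

theorem chainMap_comp_apply (K L M : AbsSC α) (h1 : K.faces ⊆ L.faces)
    (h2 : L.faces ⊆ M.faces) (h3 : K.faces ⊆ M.faces) (q : ℕ) (c : K.Chain q) :
    chainMap L M h2 q (chainMap K L h1 q c) = chainMap K M h3 q c := by
  rw [chainMap_apply, chainMap_apply, chainMap_apply, ← Finsupp.mapDomain_comp]
  rfl

theorem chainMap_self (K : AbsSC α) (h : K.faces ⊆ K.faces) (q : ℕ) (c : K.Chain q) :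
    chainMap K K h q c = c := by
  rw [chainMap_apply]
  have : simpMap K K h q = id := by
    funext s; exact Subtype.ext rfl
  rw [this, Finsupp.mapDomain_id]

theorem chainMap_support [DecidableEq α] (K L : AbsSC α) (h : K.faces ⊆ L.faces) (q : ℕ) (c : K.Chain q) :
    (chainMap K L h q c).support = c.support.image (simpMap K L h q) := by
  rw [chainMap_apply]
  exact Finsupp.mapDomain_support_of_injective (simpMap_injective K L h q) c

/-- Lifting a chain supported on faces of the subcomplex. -/
theorem chain_lift (K L : AbsSC α) (h : K.faces ⊆ L.faces) (q : ℕ) (c : L.Chain q)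
    (hc : ∀ s ∈ c.support, (s : L.simplices q).1 ∈ K.faces) :
    ∃ c' : K.Chain q, chainMap K L h q c' = c := by
  classical
  induction c using Finsupp.induction with
  | zero => exact ⟨0, map_zero _⟩
  | single_add s a f hs ha ih =>
    have hdisj : Disjoint (Finsupp.single s a).support f.support := by
      rw [Finsupp.support_single_ne_zero _ ha]
      simpa using hs
    have hsupp : (Finsupp.single s a + f).support = insert s f.support := by
      rw [Finsupp.support_add_eq hdisj, Finsupp.support_single_ne_zero _ ha, Finset.insert_eq]
    obtain ⟨f', hf'⟩ := ih (fun t ht => hc t (by rw [hsupp]; exact Finset.mem_insert_of_mem ht))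
    have hsK : s.1 ∈ K.faces := hc s (by rw [hsupp]; exact Finset.mem_insert_self _ _)
    refine ⟨Finsupp.single (α := K.simplices q) ⟨s.1, hsK, s.2.2⟩ a + f', ?_⟩
    erw [map_add, hf', chainMap_single]
    congr 1

end AbsSC
namespace AbsSC

variable {α : Type}

open Classical in
/-- Proof-irrelevant basis chain: `single ⟨T⟩ 1` if `T` is a `q`-simplex, else `0`. -/
noncomputable def faceAux (K : AbsSC α) (q : ℕ) (T : Finset α) : K.Chain q :=
  if h : T ∈ K.faces ∧ T.card = q + 1 then Finsupp.single (α := K.simplices q) ⟨T, h⟩ 1 else 0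

theorem faceAux_pos (K : AbsSC α) (q : ℕ) (T : Finset α) (h : T ∈ K.faces ∧ T.card = q + 1) :
    faceAux K q T = Finsupp.single (α := K.simplices q) ⟨T, h⟩ 1 := by
  rw [faceAux, dif_pos h]

theorem powerset_mem_cond (K : AbsSC α) (q : ℕ) (s : K.simplices (q + 1)) (T : Finset α)
    (hT : T ∈ s.1.powersetCard (q + 1)) : T ∈ K.faces ∧ T.card = q + 1 := by
  obtain ⟨hsub, hcard⟩ := Finset.mem_powersetCard.mp hT
  refine ⟨K.down_closed s.2.1 hsub ?_, hcard⟩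
  rw [← Finset.card_pos, hcard]
  omega

theorem faceChain_eq_sum (K : AbsSC α) (q : ℕ) (s : K.simplices (q + 1)) :
    K.faceChain q s = ∑ T ∈ s.1.powersetCard (q + 1), faceAux K q T := by
  rw [← Finset.sum_attach (s.1.powersetCard (q + 1)) (faceAux K q)]
  unfold faceChain
  apply Finset.sum_congr rfl
  intro t _
  rw [faceAux_pos K q t.1 (powerset_mem_cond K q s t.1 t.2)]

theorem boundary_single (K : AbsSC α) (q : ℕ) (e : K.simplices (q + 1)) (a : ZMod 2) :
    K.boundary q (Finsupp.single e a) = a • K.faceChain q e := by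
  rw [boundary, Finsupp.lsum_single, LinearMap.toSpanSingleton_apply]

theorem chainMap_faceChain (K L : AbsSC α) (h : K.faces ⊆ L.faces) (q : ℕ)
    (s : K.simplices (q + 1)) :
    chainMap K L h q (K.faceChain q s) = L.faceChain q (simpMap K L h (q + 1) s) := by
  rw [faceChain_eq_sum, faceChain_eq_sum, map_sum]
  show _ = ∑ T ∈ s.1.powersetCard (q + 1), faceAux L q T
  apply Finset.sum_congr rfl
  intro T hT
  obtain ⟨h1, h2⟩ := powerset_mem_cond K q s T hT
  erw [faceAux_pos K q T ⟨h1, h2⟩, faceAux_pos L q T ⟨h h1, h2⟩, chainMap_single]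
  rfl

theorem boundary_naturality (K L : AbsSC α) (h : K.faces ⊆ L.faces) (q : ℕ)
    (c : K.Chain (q + 1)) :
    chainMap K L h q (K.boundary q c) = L.boundary q (chainMap K L h (q + 1) c) := by
  have : (chainMap K L h q).comp (K.boundary q)
      = (L.boundary q).comp (chainMap K L h (q + 1)) := by
    apply Finsupp.lhom_ext
    intro s a
    show chainMap K L h q (K.boundary q (Finsupp.single s a))
      = L.boundary q (chainMap K L h (q + 1) (Finsupp.single s a))
    rw [boundary_single, chainMap_single, boundary_single, map_smul, chainMap_faceChain]
  exact DFunLike.congr_fun this c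

theorem support_faceChain (K : AbsSC α) (q : ℕ) (s : K.simplices (q + 1)) :
    ∀ t ∈ (K.faceChain q s).support, (t : K.simplices q).1 ⊆ s.1 := by
  classical
  intro t ht
  rw [faceChain_eq_sum] at ht
  have := Finsupp.support_finset_sum ht
  rw [Finset.mem_biUnion] at this
  obtain ⟨T, hT, htT⟩ := this
  by_cases hc : T ∈ K.faces ∧ T.card = q + 1
  · rw [faceAux_pos K q T hc] at htT
    have := Finsupp.support_single_subset htT
    erw [Finset.mem_singleton] at this
    subst this
    exact (Finset.mem_powersetCard.mp hT).1
  · rw [faceAux, dif_neg hc] at htT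
    simp at htT

theorem support_boundary (K : AbsSC α) (q : ℕ) (e : K.Chain (q + 1)) :
    ∀ t ∈ (K.boundary q e).support, ∃ E ∈ e.support, (t : K.simplices q).1 ⊆ E.1 := by
  classical
  intro t ht
  have heq : K.boundary q e = e.sum fun E a => a • K.faceChain q E := by
    rw [boundary, Finsupp.lsum_apply]
    rfl
  rw [heq] at ht
  have := Finsupp.support_sum ht
  rw [Finset.mem_biUnion] at this
  obtain ⟨E, hE, htE⟩ := this
  have : t ∈ (K.faceChain q E).support := Finsupp.support_smul htE
  exact ⟨E, hE, support_faceChain K q E t this⟩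

theorem faceChain_edge [DecidableEq α] (K : AbsSC α) (e : K.simplices 1) (a b : α)
    (hab : a ≠ b) (he : e.1 = {a, b}) (ha : {a} ∈ K.faces) (hb : {b} ∈ K.faces) :
    K.faceChain 0 e = Finsupp.single (α := K.simplices 0) ⟨{a}, ha, by simp⟩ 1
      + Finsupp.single (α := K.simplices 0) ⟨{b}, hb, by simp⟩ 1 := by
  rw [faceChain_eq_sum]
  have hpc : e.1.powersetCard 1 = {({a} : Finset α), {b}} := by
    rw [he, Finset.powersetCard_one]
    ext T
    simp [eq_comm]
  rw [hpc, Finset.sum_pair (fun hcon => hab (Finset.singleton_injective hcon))]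
  rw [faceAux_pos K 0 {a} ⟨ha, by simp⟩, faceAux_pos K 0 {b} ⟨hb, by simp⟩]

theorem simplex_zero_exists (K : AbsSC α) (s : K.simplices 0) : ∃ w, s.1 = {w} :=
  Finset.card_eq_one.mp s.2.2

end AbsSC
namespace AbsSC

variable {α : Type}

theorem InducedHom.hmap_eq {K L : AbsSC α} {f : K.Homology 0 →ₗ[ZMod 2] L.Homology 0}
    (hf : InducedHom K L 0 f) (h : K.faces ⊆ L.faces) (c : K.Chain 0) :
    f (K.hmap c) = L.hmap (chainMap K L h 0 c) := by
  obtain ⟨h', hp⟩ := hf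
  obtain ⟨hc', he⟩ := hp c (by rw [cycles_zero]; trivial)
  rw [hmap_eq_hClass K c (by rw [cycles_zero]; trivial), he, ← hmap_eq_hClass]

theorem InducedHom.subset {K L : AbsSC α} {q : ℕ} {f : K.Homology q →ₗ[ZMod 2] L.Homology q}
    (hf : InducedHom K L q f) : K.faces ⊆ L.faces := hf.choose

theorem inducedHom_id (K : AbsSC α) : InducedHom K K 0 LinearMap.id := by
  refine ⟨le_refl _, fun c hc => ⟨by rw [cycles_zero]; trivial, ?_⟩⟩
  show K.hClass 0 c hc = _
  rw [← hmap_eq_hClass, ← hmap_eq_hClass, chainMap_self]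

theorem inducedHom_comp {K L M : AbsSC α} {f : K.Homology 0 →ₗ[ZMod 2] L.Homology 0}
    {g : L.Homology 0 →ₗ[ZMod 2] M.Homology 0}
    (hf : InducedHom K L 0 f) (hg : InducedHom L M 0 g) :
    InducedHom K M 0 (g.comp f) := by
  refine ⟨hf.subset.trans hg.subset, fun c hc => ⟨by rw [cycles_zero]; trivial, ?_⟩⟩
  show g (f (K.hClass 0 c hc)) = _
  rw [← hmap_eq_hClass, hf.hmap_eq hf.subset, hg.hmap_eq hg.subset,
    chainMap_comp_apply K L M hf.subset hg.subset (hf.subset.trans hg.subset), ← hmap_eq_hClass]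

theorem comps_induced {K : ℕ → AbsSC α}
    {φ : ∀ i, (K i).Homology 0 →ₗ[ZMod 2] (K (i + 1)).Homology 0} (n : ℕ)
    (hφ : ∀ i, i < n → InducedHom (K i) (K (i + 1)) 0 (φ i))
    {i j : ℕ} (h : i ≤ j) (hj : j ≤ n) : InducedHom (K i) (K j) 0 (comps φ h) := by
  induction j, h using Nat.le_induction with
  | base => rw [comps_self]; exact inducedHom_id (K i)
  | succ j h ih =>
    rw [comps_succ_of_le φ h (h.trans j.le_succ)]
    exact inducedHom_comp (ih (by omega)) (hφ j (by omega))

theorem homology_subsingleton_of_empty (K : AbsSC α) (h : K.faces = ∅) :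
    Subsingleton (K.Homology 0) := by
  have hchain : ∀ c : K.Chain 0, c = 0 := by
    intro c
    ext s
    exact absurd s.2.1 (Set.eq_empty_iff_forall_notMem.mp h s.1)
  constructor
  intro x y
  obtain ⟨c, rfl⟩ := K.hmap_surjective x
  obtain ⟨c', rfl⟩ := K.hmap_surjective y
  rw [hchain c, hchain c']

end AbsSC

theorem range_of_subsingleton {M N : Type} [AddCommGroup M] [Module (ZMod 2) M]
    [AddCommGroup N] [Module (ZMod 2) N] (f : M →ₗ[ZMod 2] N) (h : Subsingleton M) :
    LinearMap.range f = ⊥ := by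
  rw [LinearMap.range_eq_bot]
  ext x
  rw [Subsingleton.elim x 0, map_zero]
  rfl
theorem zmod2_add_self {M : Type} [AddCommGroup M] [Module (ZMod 2) M] (x : M) : x + x = 0 := by
  have h2 : ((2 : ZMod 2)) • x = 0 := by rw [show (2 : ZMod 2) = 0 by decide, zero_smul]
  rwa [two_smul] at h2

namespace AbsSC

variable {α : Type}

theorem hmap_boundary (K : AbsSC α) (e : K.Chain 1) : K.hmap (K.boundary 0 e) = 0 :=
  (K.hmap_eq_zero_iff _).mpr ⟨e, rfl⟩

theorem theta_surj [DecidableEq α] {k : ℕ} (P : Fin k → Set α) (z : Fin k → α)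
    (K' L : AbsSC α) (hKL : L.faces = K'.faces ∪ starFaces P z)
    (hPv : ∀ j, ∀ v ∈ P j, {v} ∈ K'.faces) (hPne : ∀ j, (P j).Nonempty)
    (hz : ∀ j, {z j} ∉ K'.faces)
    {θl : K'.Homology 0 →ₗ[ZMod 2] L.Homology 0} (hθl : InducedHom K' L 0 θl) :
    Function.Surjective θl := by
  have h := hθl.subset
  have hposcase : ∀ (w : α) (hKw : {w} ∈ K'.faces) (hLw : {w} ∈ L.faces),
      L.hmap (Finsupp.single (α := L.simplices 0) ⟨{w}, hLw, by simp⟩ 1) ∈ LinearMap.range θl := by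
    intro w hKw hLw
    have heq : Finsupp.single (α := L.simplices 0) ⟨{w}, hLw, by simp⟩ (1 : ZMod 2)
        = chainMap K' L h 0 (Finsupp.single (α := K'.simplices 0) ⟨{w}, hKw, by simp⟩ 1) := by
      erw [chainMap_single]
      rfl
    erw [heq, ← hθl.hmap_eq h]
    exact ⟨_, rfl⟩
  have hsingle : ∀ s : L.simplices 0,
      L.hmap (Finsupp.single s 1) ∈ LinearMap.range θl := by
    intro s
    obtain ⟨w, hw⟩ := L.simplex_zero_exists s
    have hsw : s = ⟨{w}, by rw [← hw]; exact s.2.1, by simp⟩ := Subtype.ext hw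
    by_cases hKw : ({w} : Finset α) ∈ K'.faces
    · rw [hsw]; exact hposcase w hKw (by rw [← hw]; exact s.2.1)
    · -- w must be some z j
      have hsL : s.1 ∈ K'.faces ∪ starFaces P z := by rw [← hKL]; exact s.2.1
      rcases hsL with hsK | hsS
      · exact absurd (hw ▸ hsK) hKw
      · obtain ⟨j, hj⟩ := hsS
        have hwz : w = z j := by
          rcases hj with h1 | ⟨v, hvP, h2 | h3⟩
          · rw [hw] at h1; exact Finset.singleton_injective h1
          · rw [hw] at h2
            exact absurd (Finset.singleton_injective h2 ▸ hPv j v hvP) hKw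
          · exfalso
            have hvK := hPv j v hvP
            have hne : z j ≠ v := fun hc => hz j (hc ▸ hvK)
            have : ({z j, v} : Finset α).card = 2 := Finset.card_pair hne
            rw [hw] at h3
            rw [← h3] at this
            simp at this
        subst hwz
        -- use a star edge {z j, v}
        obtain ⟨v, hvP⟩ := hPne j
        have hvK := hPv j v hvP
        have hne : z j ≠ v := fun hc => hz j (hc ▸ hvK)
        have hE : ({z j, v} : Finset α) ∈ L.faces := by
          rw [hKL]
          exact Or.inr ⟨j, Or.inr ⟨v, hvP, Or.inr rfl⟩⟩
        have hcardE : ({z j, v} : Finset α).card = 1 + 1 := Finset.card_pair hne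
        set eL : L.simplices 1 := ⟨{z j, v}, hE, hcardE⟩ with heL
        have hzL : ({z j} : Finset α) ∈ L.faces := by rw [← hw]; exact s.2.1
        have hvL : ({v} : Finset α) ∈ L.faces := h hvK
        have hb : L.boundary 0 (Finsupp.single eL 1)
            = Finsupp.single (α := L.simplices 0) ⟨{z j}, hzL, by simp⟩ 1 + Finsupp.single (α := L.simplices 0) ⟨{v}, hvL, by simp⟩ 1 := by
          rw [boundary_single, one_smul]
          exact faceChain_edge L eL (z j) v hne rfl hzL hvL
        have hkey : Finsupp.single (α := L.simplices 0) ⟨{z j}, hzL, by simp⟩ (1 : ZMod 2)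
            = L.boundary 0 (Finsupp.single eL 1) + Finsupp.single (α := L.simplices 0) ⟨{v}, hvL, by simp⟩ 1 := by
          erw [hb, add_assoc, zmod2_add_self, add_zero]
        rw [hsw]
        show L.hmap (Finsupp.single (α := L.simplices 0) ⟨{z j}, hzL, by simp⟩ 1) ∈ _
        erw [hkey, map_add, hmap_boundary, zero_add]
        exact hposcase v hvK hvL
  intro t
  obtain ⟨c, rfl⟩ := L.hmap_surjective t
  have : ∀ c : L.Chain 0, L.hmap c ∈ LinearMap.range θl := by
    intro c
    induction c using Finsupp.induction with
    | zero => rw [map_zero]; exact Submodule.zero_mem _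
    | single_add s a f _ _ ih =>
      rw [map_add]
      refine Submodule.add_mem _ ?_ ih
      have : Finsupp.single s a = a • Finsupp.single s (1 : ZMod 2) := by
        rw [Finsupp.smul_single, smul_eq_mul, mul_one]
      rw [this, map_smul]
      exact Submodule.smul_mem _ _ (hsingle s)
  exact this c

end AbsSC
namespace AbsSC

variable {α : Type}

/-- Key lemma: a homology class of `Kd` killed by the gluing map comes, via the tower map,
from a class of `K1` killed by the gluing map at level 1. -/
theorem ker_theta_lift [DecidableEq α] {k : ℕ} (P : Fin k → Set α) (z : Fin k → α)
    (K1 Kd Kt1 Ktd : AbsSC α)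
    (hK1d : K1.faces ⊆ Kd.faces)
    (hKt1d : Kt1.faces ⊆ Ktd.faces)
    (h1 : K1.faces ⊆ Kt1.faces)
    (hd : Kd.faces ⊆ Ktd.faces)
    (hKt1 : Kt1.faces = K1.faces ∪ starFaces P z)
    (hKtd : Ktd.faces = Kd.faces ∪ starFaces P z)
    (hPv : ∀ j, ∀ v ∈ P j, {v} ∈ K1.faces)
    (hzKd : ∀ j, {z j} ∉ Kd.faces)
    {θ1 : K1.Homology 0 →ₗ[ZMod 2] Kt1.Homology 0} (hθ1 : InducedHom K1 Kt1 0 θ1)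
    {θd : Kd.Homology 0 →ₗ[ZMod 2] Ktd.Homology 0} (hθd : InducedHom Kd Ktd 0 θd)
    {Φ : K1.Homology 0 →ₗ[ZMod 2] Kd.Homology 0} (hΦ : InducedHom K1 Kd 0 Φ)
    (w : Kd.Homology 0) (hw : θd w = 0) :
    ∃ u : K1.Homology 0, θ1 u = 0 ∧ Φ u = w := by
  classical
  obtain ⟨c, rfl⟩ := Kd.hmap_surjective w
  rw [hθd.hmap_eq hd, hmap_eq_zero_iff] at hw
  obtain ⟨e, he⟩ := hw
  set p : Ktd.simplices 1 → Prop := fun E => E.1 ∈ Kd.faces with hp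
  set eK : Ktd.Chain 1 := e.filter p with heK
  set eS : Ktd.Chain 1 := e.filter (fun E => ¬ p E) with heS
  have hsplit : eK + eS = e := Finsupp.filter_pos_add_filter_neg e p
  -- lift eK to a chain of Kd
  obtain ⟨eK', heK'⟩ := chain_lift Kd Ktd hd 1 eK (by
    intro E hE
    rw [heK, Finsupp.support_filter, Finset.mem_filter] at hE
    exact hE.2)
  -- classification of eS support
  have hclass : ∀ E ∈ eS.support, ∃ (j : Fin k) (u : α),
      u ∈ P j ∧ z j ≠ u ∧ (E : Ktd.simplices 1).1 = {z j, u} := by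
    intro E hE
    rw [heS, Finsupp.support_filter, Finset.mem_filter] at hE
    have hnotKd : E.1 ∉ Kd.faces := hE.2
    have hstar : E.1 ∈ starFaces P z := by
      have hEm : E.1 ∈ Kd.faces ∪ starFaces P z := by rw [← hKtd]; exact E.2.1
      rcases hEm with h' | h'
      · exact absurd h' hnotKd
      · exact h'
    obtain ⟨j, hj⟩ := hstar
    have hcard : E.1.card = 2 := E.2.2
    rcases hj with h' | ⟨v, hvP, h' | h'⟩
    · rw [h'] at hcard; simp at hcard
    · rw [h'] at hcard; simp at hcard
    · refine ⟨j, v, hvP, ?_, h'⟩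
      intro hzv
      rw [h', ← hzv] at hcard
      simp at hcard
  -- the corrected chain c₀
  set c₀ : Kd.Chain 0 := c + Kd.boundary 0 eK' with hc₀
  have hc₀S : chainMap Kd Ktd hd 0 c₀ = Ktd.boundary 0 eS := by
    rw [hc₀, map_add, ← he, boundary_naturality, heK', ← hsplit, map_add]
    rw [add_right_comm, zmod2_add_self, zero_add]
  -- support of c₀ consists of vertices in the P j's
  have hc₀supp : ∀ s ∈ c₀.support, (s : Kd.simplices 0).1 ∈ K1.faces := by
    intro s hs
    have hs' : simpMap Kd Ktd hd 0 s ∈ (chainMap Kd Ktd hd 0 c₀).support := by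
      rw [chainMap_support]
      exact Finset.mem_image_of_mem _ hs
    rw [hc₀S] at hs'
    obtain ⟨E, hE, hsub⟩ := support_boundary Ktd 0 eS _ hs'
    obtain ⟨j, u, huP, hzu, hEval⟩ := hclass E hE
    have hsub' : (s : Kd.simplices 0).1 ⊆ ({z j, u} : Finset α) := by
      rw [← hEval]; exact hsub
    obtain ⟨x, hx⟩ := Kd.simplex_zero_exists s
    have hxmem : x ∈ ({z j, u} : Finset α) := hsub' (by rw [hx]; exact Finset.mem_singleton_self x)
    rcases Finset.mem_insert.mp hxmem with h' | h'
    · exfalso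
      apply hzKd j
      rw [← h', ← hx]
      exact s.2.1
    · rw [Finset.mem_singleton] at h'
      rw [hx, h']
      exact hPv j u huP
  obtain ⟨c₁, hc₁⟩ := chain_lift K1 Kd hK1d 0 c₀ hc₀supp
  refine ⟨K1.hmap c₁, ?_, ?_⟩
  · -- θ1 kills the class of c₁
    rw [hθ1.hmap_eq h1, hmap_eq_zero_iff]
    -- lift eS to Kt1
    obtain ⟨eS1, heS1⟩ := chain_lift Kt1 Ktd hKt1d 1 eS (by
      intro E hE
      obtain ⟨j, u, huP, hzu, hEval⟩ := hclass E hE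
      rw [hEval, hKt1]
      exact Or.inr ⟨j, Or.inr ⟨u, huP, Or.inr rfl⟩⟩)
    refine ⟨eS1, ?_⟩
    apply chainMap_injective Kt1 Ktd hKt1d 0
    rw [boundary_naturality, heS1, ← hc₀S, ← hc₁,
      chainMap_comp_apply K1 Kd Ktd hK1d hd (hK1d.trans hd),
      chainMap_comp_apply K1 Kt1 Ktd h1 hKt1d (hK1d.trans hd)]
  · -- Φ maps the class of c₁ to the class of c
    rw [hΦ.hmap_eq hK1d, hc₁, hc₀, map_add, hmap_boundary, add_zero]

end AbsSC


/-- if `t 0, …, t (m-1) ∈ H_0(K̃_b)` have linearly independent cosets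
modulo `im ψ_{b-1}` and each `t i` has persistence interval `(b, dd i)` (with
`dd i ∈ {b+1, …, n} ∪ {∞}`), then there exist `s 0, …, s (m-1) ∈ H_0(K_b)` with
`θ_{0,b}(s i) = t i`, whose cosets modulo `im φ_{b-1}` are linearly independent, and
such that each `s i` has persistence interval `(b, dd i)` in `H_0(K_•)`.  (In
particular, the 0-th persistence barcode of `K̃_•` is contained as a multiset of
intervals in the 0-th persistence barcode of `K_•`.) -/
theorem stmt12 {α : Type} [DecidableEq α] (n k : ℕ)
    (K Kt : ℕ → AbsSC α)
    (hK0 : (K 0).faces = ∅)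
    (hKt0 : (Kt 0).faces = ∅)
    (hKmono : ∀ i, i < n → (K i).faces ⊆ (K (i + 1)).faces)
    (hKtmono : ∀ i, i < n → (Kt i).faces ⊆ (Kt (i + 1)).faces)
    (P : Fin k → Set α)
    (hPne : ∀ j, (P j).Nonempty)
    (hPdisj : Pairwise (Function.onFun Disjoint P))
    (hPunion : (⋃ j, P j) = (K 1).vertexSet)
    (z : Fin k → α)
    (hzinj : Function.Injective z)
    (hznew : ∀ (j : Fin k) (i : ℕ), i ≤ n → z j ∉ (K i).vertexSet)
    (hKt : ∀ i, 1 ≤ i → i ≤ n → (Kt i).faces = (K i).faces ∪ starFaces P z)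
    (φ : ∀ i : ℕ, (K i).Homology 0 →ₗ[ZMod 2] (K (i + 1)).Homology 0)
    (ψ : ∀ i : ℕ, (Kt i).Homology 0 →ₗ[ZMod 2] (Kt (i + 1)).Homology 0)
    (θ : ∀ i : ℕ, (K i).Homology 0 →ₗ[ZMod 2] (Kt i).Homology 0)
    (hφ : ∀ i, i < n → AbsSC.InducedHom (K i) (K (i + 1)) 0 (φ i))
    (hψ : ∀ i, i < n → AbsSC.InducedHom (Kt i) (Kt (i + 1)) 0 (ψ i))
    (hθ : ∀ i, i ≤ n → AbsSC.InducedHom (K i) (Kt i) 0 (θ i))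
    (hsq : ∀ i, i < n → (θ (i + 1)).comp (φ i) = (ψ i).comp (θ i))
    (b : ℕ) (hb1 : 1 ≤ b) (hbn : b ≤ n)
    (m : ℕ)
    (t : Fin m → (Kt b).Homology 0)
    (dd : Fin m → ℕ∞)
    (hdd : ∀ i, dd i = ⊤ ∨ ∃ di : ℕ, dd i = (di : ℕ∞) ∧ b < di ∧ di ≤ n)
    (htindep : LinearIndependent (ZMod 2)
      (fun i : Fin m =>
        Submodule.Quotient.mk (p := LinearMap.range (comps ψ (Nat.sub_le b 1))) (t i)))
    (htfin : ∀ (i : Fin m) (di : ℕ), dd i = (di : ℕ∞) → HasPersIntervalFin ψ n b di (t i))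
    (htinf : ∀ i : Fin m, dd i = ⊤ → HasPersIntervalInf ψ n b (t i)) :
    ∃ s : Fin m → (K b).Homology 0,
      (∀ i, θ b (s i) = t i) ∧
      LinearIndependent (ZMod 2)
        (fun i : Fin m =>
          Submodule.Quotient.mk (p := LinearMap.range (comps φ (Nat.sub_le b 1))) (s i)) ∧
      (∀ (i : Fin m) (di : ℕ), dd i = (di : ℕ∞) → HasPersIntervalFin φ n b di (s i)) ∧
      (∀ i : Fin m, dd i = ⊤ → HasPersIntervalInf φ n b (s i)) := by
  classical
  have hn1 : 1 ≤ n := hb1.trans hbn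
  -- basic derived facts
  have hcind : ∀ {i j : ℕ} (h : i ≤ j), j ≤ n → AbsSC.InducedHom (K i) (K j) 0 (comps φ h) :=
    fun h hj => AbsSC.comps_induced n hφ h hj
  have hmono : ∀ {i j : ℕ}, i ≤ j → j ≤ n → (K i).faces ⊆ (K j).faces :=
    fun h hj => (hcind h hj).subset
  have htmono : ∀ {i j : ℕ}, i ≤ j → j ≤ n → (Kt i).faces ⊆ (Kt j).faces :=
    fun h hj => (AbsSC.comps_induced n hψ h hj).subset
  have comm : ∀ {i j : ℕ} (h : i ≤ j), j ≤ n → ∀ x : (K i).Homology 0,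
      θ j (comps φ h x) = comps ψ h (θ i x) :=
    fun h hj x => comm_comps_apply n φ ψ θ hsq h hj x
  have hPv : ∀ i, 1 ≤ i → i ≤ n → ∀ (j : Fin k), ∀ v ∈ P j, ({v} : Finset α) ∈ (K i).faces := by
    intro i h1i hi j v hv
    have hv1 : v ∈ (K 1).vertexSet := hPunion ▸ Set.mem_iUnion.mpr ⟨j, hv⟩
    exact hmono h1i hi hv1
  have hznew' : ∀ (j : Fin k) (i : ℕ), i ≤ n → ({z j} : Finset α) ∉ (K i).faces :=
    fun j i hi => hznew j i hi
  -- surjectivity of θ at levels 1..n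
  have surjθ : ∀ i, 1 ≤ i → i ≤ n → Function.Surjective (θ i) := by
    intro i h1i hin
    exact AbsSC.theta_surj P z (K i) (Kt i) (hKt i h1i hin)
      (fun j v hv => hPv i h1i hin j v hv) hPne (fun j => hznew' j i hin) (hθ i hin)
  -- kernel lifting
  have kerlift : ∀ (d : ℕ) (h1d : 1 ≤ d), d ≤ n → ∀ w : (K d).Homology 0, θ d w = 0 →
      ∃ u : (K 1).Homology 0, θ 1 u = 0 ∧ comps φ h1d u = w := by
    intro d h1d hdn w hw
    exact AbsSC.ker_theta_lift P z (K 1) (K d) (Kt 1) (Kt d)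
      (hmono h1d hdn) (htmono h1d hdn) ((hθ 1 hn1).subset) ((hθ d hdn).subset)
      (hKt 1 le_rfl hn1) (hKt d h1d hdn)
      (fun j v hv => hPv 1 le_rfl hn1 j v hv) (fun j => hznew' j d hdn)
      (hθ 1 hn1) (hθ d hdn) (hcind h1d hdn) w hw
  -- range from level 0 is trivial
  have hsub0 : Subsingleton ((Kt 0).Homology 0) :=
    AbsSC.homology_subsingleton_of_empty (Kt 0) hKt0
  -- key construction
  have key : ∀ i : Fin m, ∃ si : (K b).Homology 0, θ b si = t i ∧
      ∀ (di : ℕ), dd i = (di : ℕ∞) → ∀ (h1 : b ≤ di),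
        comps φ h1 si ∈
          LinearMap.range (comps φ (Nat.le_trans (Nat.sub_le b 1) h1)) := by
    intro i
    rcases hdd i with htop | ⟨di, hdi, hbdi, hdin⟩
    · obtain ⟨si, hsi⟩ := surjθ b hb1 hbn (t i)
      refine ⟨si, hsi, fun di hcon => ?_⟩
      rw [htop] at hcon
      exact absurd hcon.symm (by simp)
    · obtain ⟨_, hbd, hdn, _, _, hmem⟩ := htfin i di hdi
      obtain ⟨si, hsi⟩ := surjθ b hb1 hbn (t i)
      by_cases hb2 : 2 ≤ b
      · -- no correction needed
        refine ⟨si, hsi, fun di' hdi' h1 => ?_⟩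
        have hdd' : di' = di := by
          rw [hdi] at hdi'
          exact_mod_cast hdi'.symm
        subst hdd'
        obtain ⟨y, hy⟩ := hmem
        obtain ⟨x, hx⟩ := surjθ (b - 1) (by omega) (by omega) y
        set hb1d : b - 1 ≤ di' := Nat.le_trans (Nat.sub_le b 1) h1 with hhb1d
        have hθw : θ di' (comps φ h1 si + comps φ hb1d x) = 0 := by
          rw [map_add, comm h1 hdn si, comm hb1d hdn x, hsi, hx]
          have hy' : comps ψ hb1d y = comps ψ h1 (t i) := hy
          rw [hy', zmod2_add_self]
        obtain ⟨u, hu0, huw⟩ := kerlift di' (by omega) hdn _ hθw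
        refine ⟨x + comps φ (show (1:ℕ) ≤ b - 1 by omega) u, ?_⟩
        rw [map_add, comps_trans_apply φ (show (1:ℕ) ≤ b - 1 by omega) hb1d
          (show (1:ℕ) ≤ di' by omega) u]
        have huw' : comps φ (show (1:ℕ) ≤ di' by omega) u
            = comps φ h1 si + comps φ hb1d x := huw
        rw [huw', add_comm (comps φ h1 si) (comps φ hb1d x), ← add_assoc,
          zmod2_add_self, zero_add]
      · -- b = 1 : correct by an element of ker θ 1
        have hbe : b = 1 := by omega
        subst hbe
        have hψ0 : comps ψ (Nat.le_of_lt hbd) (t i) = 0 := by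
          obtain ⟨y, hy⟩ := hmem
          rw [← hy, Subsingleton.elim y 0, map_zero]
        have hθ0 : θ di (comps φ (Nat.le_of_lt hbd) si) = 0 := by
          rw [comm (Nat.le_of_lt hbd) hdn si, hsi, hψ0]
        obtain ⟨u, hu0, huw⟩ := kerlift di (by omega) hdn _ hθ0
        refine ⟨si + u, by rw [map_add, hsi, hu0, add_zero], fun di' hdi' h1 => ?_⟩
        have hdd' : di' = di := by
          rw [hdi] at hdi'
          exact_mod_cast hdi'.symm
        subst hdd'
        have huw' : comps φ h1 u = comps φ h1 si := huw
        have hz : comps φ h1 (si + u) = 0 := by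
          rw [map_add, huw', zmod2_add_self]
        rw [hz]
        exact Submodule.zero_mem _
    -- choose the lifts
  choose s hs1 hs2 using key
  -- non-membership transfer
  have hnonmem : ∀ (i : Fin m) (d' : ℕ) (hd' : b ≤ d'), d' ≤ n →
      comps ψ hd' (t i) ∉ LinearMap.range (comps ψ (Nat.le_trans (Nat.sub_le b 1) hd')) →
      comps φ hd' (s i) ∉ LinearMap.range (comps φ (Nat.le_trans (Nat.sub_le b 1) hd')) := by
    rintro i d' hd' hd'n hpsi ⟨x, hx⟩
    apply hpsi
    refine ⟨θ (b - 1) x, ?_⟩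
    rw [← comm (Nat.le_trans (Nat.sub_le b 1) hd') hd'n x, hx,
      comm hd' hd'n (s i), hs1 i]
  have hnonmem0 : ∀ i : Fin m,
      t i ∉ LinearMap.range (comps ψ (Nat.sub_le b 1)) →
      s i ∉ LinearMap.range (comps φ (Nat.sub_le b 1)) := by
    rintro i hpsi ⟨x, hx⟩
    apply hpsi
    refine ⟨θ (b - 1) x, ?_⟩
    rw [← comm (Nat.sub_le b 1) hbn x, hx, hs1 i]
  refine ⟨s, hs1, ?_, ?_, ?_⟩
  · -- linear independence
    rw [Fintype.linearIndependent_iff]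
    intro g hg
    have hg' : (LinearMap.range (comps φ (Nat.sub_le b 1))).mkQ (∑ i, g i • s i) = 0 := by
      rw [map_sum]
      simp only [map_smul, Submodule.mkQ_apply]
      exact hg
    rw [Submodule.mkQ_apply, Submodule.Quotient.mk_eq_zero] at hg'
    obtain ⟨x, hx⟩ := hg'
    have hmem : (∑ i, g i • t i) ∈ LinearMap.range (comps ψ (Nat.sub_le b 1)) := by
      refine ⟨θ (b - 1) x, ?_⟩
      rw [← comm (Nat.sub_le b 1) hbn x, hx, map_sum]
      simp only [map_smul, hs1]
    have htsum : ∑ i, g i • (Submodule.Quotient.mk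
        (p := LinearMap.range (comps ψ (Nat.sub_le b 1))) (t i)) = 0 := by
      have : (LinearMap.range (comps ψ (Nat.sub_le b 1))).mkQ (∑ i, g i • t i) = 0 := by
        rw [Submodule.mkQ_apply, Submodule.Quotient.mk_eq_zero]
        exact hmem
      rw [map_sum] at this
      simpa only [map_smul, Submodule.mkQ_apply] using this
    exact fun i => Fintype.linearIndependent_iff.mp htindep g htsum i
  · -- finite persistence intervals
    intro i di hdi
    obtain ⟨hb1', hbd, hdn, hnot0, hnotd', _⟩ := htfin i di hdi
    refine ⟨hb1', hbd, hdn, ?_, ?_, ?_⟩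
    · exact hnonmem0 i hnot0
    · intro d' hd' hltd
      exact hnonmem i d' hd' (by omega) (hnotd' d' hd' hltd)
    · exact hs2 i di hdi (Nat.le_of_lt hbd)
  · -- infinite persistence intervals
    intro i hdi
    obtain ⟨hb1', hnot0, hnotd'⟩ := htinf i hdi
    refine ⟨hb1', hnonmem0 i hnot0, ?_⟩
    intro d' hd' hd'n
    exact hnonmem i d' hd' hd'n (hnotd' d' hd' hd'n)
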